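/- Let H be a real Hilbert space, let B be a bounded self-adjoint linear operator on H with ⟨B v, v⟩ ≤ 0 for all v ∈ H, let k ≥ 1, and let t ≥ 0. Then for any vectors v₁, …, v_k ∈ H, the Gram determinant does not increase under application of exp(t B): det [⟨exp(t B) v_i, exp(t B) v_j⟩]_{i,j=1,…,k} ≤ det [⟨v_i, v_j⟩]_{i,j=1,…,k}. (This expresses that the k-fold wedge power of exp(t B) is a contraction on blades: ‖exp(tB)v₁ ∧ ⋯ ∧ exp(tB)v_k‖ ≤ ‖v₁ ∧ ⋯ ∧ v_k‖, where the norm of a k-blade satisfies ‖v₁ ∧ ⋯ ∧ v_k‖² = det[⟨v_i, v_j⟩].) -/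

import Mathlib

open scoped RealInnerProductSpace

open Matrix in
/-- A real PSD matrix whose quadratic form is dominated by the standard one has
determinant at most `1`. -/
lemma aux_det_le_one {k : ℕ} {M : Matrix (Fin k) (Fin k) ℝ}
    (hM : M.PosSemidef) (h : ∀ x : Fin k → ℝ, x ⬝ᵥ M *ᵥ x ≤ x ⬝ᵥ x) :
    M.det ≤ 1 := by
  rw [hM.1.det_eq_prod_eigenvalues]
  refine Finset.prod_le_one (fun i _ => by exact_mod_cast hM.eigenvalues_nonneg i) ?_
  intro i _
  have he := hM.1.eigenvalues_eq i
  set x : Fin k → ℝ := ⇑(hM.1.eigenvectorBasis i) with hx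
  have hxx : x ⬝ᵥ x = 1 := by
    have h1 : ‖hM.1.eigenvectorBasis i‖ = 1 := hM.1.eigenvectorBasis.orthonormal.1 i
    have h2 : ⟪hM.1.eigenvectorBasis i, hM.1.eigenvectorBasis i⟫ = 1 := by
      rw [real_inner_self_eq_norm_mul_norm, h1, one_mul]
    rw [← h2]
    simp only [dotProduct, PiLp.inner_apply, RCLike.inner_apply, conj_trivial]
    exact Finset.sum_congr rfl fun j _ => mul_comm _ _
  have : (hM.1.eigenvalues i : ℝ) = x ⬝ᵥ M *ᵥ x := by
    simpa [hx] using he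
  rw [this, ← hxx] at *
  exact h x

open Matrix in
open scoped MatrixOrder in
/-- Determinant monotonicity, positive-definite upper bound case. -/
lemma aux_det_mono_posdef {k : ℕ} {A B : Matrix (Fin k) (Fin k) ℝ}
    (hA : A.PosSemidef) (hB : B.PosDef)
    (h : ∀ x : Fin k → ℝ, x ⬝ᵥ A *ᵥ x ≤ x ⬝ᵥ B *ᵥ x) : A.det ≤ B.det := by
  classical
  set S := CFC.sqrt B with hSdef
  have hS : S.PosSemidef := Matrix.nonneg_iff_posSemidef.mp (CFC.sqrt_nonneg B)
  have hSS : S * S = B := CFC.sqrt_mul_sqrt_self B hB.posSemidef.nonneg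
  have hdetS : S.det * S.det = B.det := by rw [← Matrix.det_mul, hSS]
  have hBdet : 0 < B.det := hB.det_pos
  have hdS : IsUnit S.det := by
    refine isUnit_iff_ne_zero.2 fun h0 => ?_
    rw [h0, mul_zero] at hdetS
    exact hBdet.ne' hdetS.symm
  set N := S⁻¹ with hNdef
  have hNS : N * S = 1 := Matrix.nonsing_inv_mul S hdS
  have hSN : S * N = 1 := Matrix.mul_nonsing_inv S hdS
  have hNH : Nᴴ = N := by
    rw [hNdef, Matrix.conjTranspose_nonsing_inv, hS.1]
  set M := Nᴴ * A * N with hMdef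
  have hM : M.PosSemidef := hA.conjTranspose_mul_mul_same N
  -- quadratic form of conjugated matrices
  have key : ∀ (C : Matrix (Fin k) (Fin k) ℝ) (x : Fin k → ℝ),
      x ⬝ᵥ (Nᴴ * C * N) *ᵥ x = (N *ᵥ x) ⬝ᵥ C *ᵥ (N *ᵥ x) := by
    intro C x
    rw [← Matrix.mulVec_mulVec, ← Matrix.mulVec_mulVec, Matrix.dotProduct_mulVec x Nᴴ,
      Matrix.vecMul_conjTranspose]
    simp
  have hMform : ∀ x : Fin k → ℝ, x ⬝ᵥ M *ᵥ x ≤ x ⬝ᵥ x := by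
    intro x
    have h1 : x ⬝ᵥ M *ᵥ x = (N *ᵥ x) ⬝ᵥ A *ᵥ (N *ᵥ x) := key A x
    have h2 : (N *ᵥ x) ⬝ᵥ B *ᵥ (N *ᵥ x) = x ⬝ᵥ (Nᴴ * B * N) *ᵥ x := (key B x).symm
    have h3 : Nᴴ * B * N = 1 := by
      rw [hNH, ← hSS, show N * (S * S) * N = (N * S) * (S * N) by noncomm_ring, hNS, hSN, one_mul]
    calc x ⬝ᵥ M *ᵥ x = (N *ᵥ x) ⬝ᵥ A *ᵥ (N *ᵥ x) := h1
      _ ≤ (N *ᵥ x) ⬝ᵥ B *ᵥ (N *ᵥ x) := h _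
      _ = x ⬝ᵥ (Nᴴ * B * N) *ᵥ x := h2
      _ = x ⬝ᵥ x := by rw [h3, Matrix.one_mulVec]
  have hMdet : M.det ≤ 1 := aux_det_le_one hM hMform
  have hNdet : N.det = S.det⁻¹ := by
    rw [hNdef, Matrix.det_nonsing_inv, Ring.inverse_eq_inv']
  have hMdeteq : M.det = A.det * (S.det⁻¹ * S.det⁻¹) := by
    rw [hMdef, Matrix.det_mul, Matrix.det_mul, hNH, hNdet]
    ring
  have hSne : S.det ≠ 0 := fun h0 => hBdet.ne' (by rw [← hdetS, h0, mul_zero])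
  have : A.det = M.det * B.det := by
    rw [hMdeteq, ← hdetS]
    field_simp
  rw [this]
  nlinarith [hMdet, hBdet]

open Matrix in
/-- Determinant monotonicity for the Loewner order on real symmetric matrices. -/
lemma aux_det_mono {k : ℕ} {A B : Matrix (Fin k) (Fin k) ℝ}
    (hA : A.PosSemidef) (hB : B.IsHermitian)
    (h : ∀ x : Fin k → ℝ, x ⬝ᵥ A *ᵥ x ≤ x ⬝ᵥ B *ᵥ x) : A.det ≤ B.det := by
  classical
  have hBpsd : B.PosSemidef := by
    refine Matrix.PosSemidef.of_dotProduct_mulVec_nonneg hB fun x => ?_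
    have := le_trans (by simpa using hA.dotProduct_mulVec_nonneg x) (h x)
    simpa using this
  -- perturb `B` to a positive definite matrix
  have hpert : ∀ ε : ℝ, 0 < ε → A.det ≤ (B + ε • (1 : Matrix (Fin k) (Fin k) ℝ)).det := by
    intro ε hε
    have hdiag : (ε • (1 : Matrix (Fin k) (Fin k) ℝ)) = Matrix.diagonal (fun _ => ε) := by
      rw [Matrix.smul_one_eq_diagonal]
    have hD : (ε • (1 : Matrix (Fin k) (Fin k) ℝ)).PosDef := by
      rw [hdiag]
      exact Matrix.PosDef.diagonal fun _ => hε
    have hBe : (B + ε • (1 : Matrix (Fin k) (Fin k) ℝ)).PosDef := Matrix.PosDef.posSemidef_add hBpsd hD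
    refine aux_det_mono_posdef hA hBe fun x => ?_
    rw [Matrix.add_mulVec, dotProduct_add]
    have h0 : 0 ≤ x ⬝ᵥ (ε • (1 : Matrix (Fin k) (Fin k) ℝ)) *ᵥ x := by
      simpa using hD.posSemidef.dotProduct_mulVec_nonneg x
    linarith [h x]
  -- pass to the limit ε → 0⁺
  have hcont : Continuous fun ε : ℝ => (B + ε • (1 : Matrix (Fin k) (Fin k) ℝ)).det := by
    apply Continuous.matrix_det
    exact continuous_const.add (continuous_id.smul continuous_const)
  have htend : Filter.Tendsto (fun ε : ℝ => (B + ε • (1 : Matrix (Fin k) (Fin k) ℝ)).det)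
      (nhdsWithin 0 (Set.Ioi 0)) (nhds B.det) := by
    have := hcont.tendsto 0
    simpa using this.mono_left nhdsWithin_le_nhds
  refine ge_of_tendsto htend ?_
  filter_upwards [self_mem_nhdsWithin] with ε hε
  exact hpert ε hε

/-- The semigroup generated by a self-adjoint negative semi-definite operator is a
contraction semigroup. -/
lemma aux_exp_contraction {H : Type*} [NormedAddCommGroup H] [InnerProductSpace ℝ H]
    [CompleteSpace H] (B : H →L[ℝ] H) (hB_neg : ∀ v : H, ⟪B v, v⟫ ≤ 0)
    (t : ℝ) (ht : 0 ≤ t) (w : H) :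
    ‖NormedSpace.exp (t • B) w‖ ≤ ‖w‖ := by
  set g : ℝ → H := fun s => NormedSpace.exp (s • B) w with hg
  have hgderiv : ∀ s : ℝ, HasDerivAt g (B (g s)) s := by
    intro s
    have h1 : HasDerivAt (fun u : ℝ => NormedSpace.exp (u • B))
        (B * NormedSpace.exp (s • B)) s := hasDerivAt_exp_smul_const' B s
    have h2 := h1.clm_apply (hasDerivAt_const s w)
    simpa [hg, ContinuousLinearMap.mul_apply] using h2
  set f : ℝ → ℝ := fun s => ⟪g s, g s⟫ with hf
  have hfderiv : ∀ s : ℝ, HasDerivAt f (2 * ⟪B (g s), g s⟫) s := by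
    intro s
    have := (hgderiv s).inner ℝ (hgderiv s)
    have heq : ⟪g s, B (g s)⟫ + ⟪B (g s), g s⟫ = 2 * ⟪B (g s), g s⟫ := by
      rw [real_inner_comm (g s) (B (g s))]; ring
    simpa [hf, heq] using this
  have hanti : Antitone f :=
    antitone_of_hasDerivAt_nonpos hfderiv fun s => by
      have := hB_neg (g s)
      simp only [Pi.zero_apply]
      linarith
  have hle : f t ≤ f 0 := hanti ht
  have hg0 : g 0 = w := by simp [hg, NormedSpace.exp_zero]
  have hft : f t = ‖g t‖ ^ 2 := real_inner_self_eq_norm_sq (g t)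
  have hf0 : f 0 = ‖w‖ ^ 2 := by
    show ⟪g 0, g 0⟫ = ‖w‖ ^ 2
    rw [hg0]; exact real_inner_self_eq_norm_sq w
  rw [hft, hf0] at hle
  nlinarith [norm_nonneg (g t), norm_nonneg w]

open Matrix in
/-- The quadratic form of a Gram matrix. -/
lemma aux_gram_dot {H : Type*} [NormedAddCommGroup H] [InnerProductSpace ℝ H]
    {k : ℕ} (w : Fin k → H) (x : Fin k → ℝ) :
    x ⬝ᵥ (Matrix.of fun i j : Fin k => ⟪w i, w j⟫) *ᵥ x
      = ⟪∑ i, x i • w i, ∑ j, x j • w j⟫ := by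
  simp only [dotProduct, Matrix.mulVec, Matrix.of_apply, sum_inner, inner_sum,
    real_inner_smul_left, real_inner_smul_right, Finset.mul_sum]
  exact Finset.sum_congr rfl fun i _ => Finset.sum_congr rfl fun j _ => by
    rw [real_inner_comm (w j) (w i)]; ring

open Matrix in
/-- Gram matrices are positive semi-definite. -/
lemma aux_gram_psd {H : Type*} [NormedAddCommGroup H] [InnerProductSpace ℝ H]
    {k : ℕ} (w : Fin k → H) :
    (Matrix.of fun i j : Fin k => ⟪w i, w j⟫).PosSemidef := by
  refine Matrix.PosSemidef.of_dotProduct_mulVec_nonneg ?_ ?_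
  · ext i j
    simp [Matrix.conjTranspose_apply, real_inner_comm]
  · intro x
    have := aux_gram_dot w x
    simp only [star_trivial]
    rw [this]
    exact real_inner_self_nonneg

/-- If `B` is a bounded self-adjoint negative semi-definite operator on a real Hilbert
space, then for `t ≥ 0` the Gram determinant of `k` vectors does not increase under
application of `exp (t B)`; i.e. the `k`-th wedge power of `exp (t B)` is a contraction
on `k`-blades. -/
theorem gram_det_exp_neg_semidef_le
    {H : Type*} [NormedAddCommGroup H] [InnerProductSpace ℝ H] [CompleteSpace H]
    (B : H →L[ℝ] H)
    (hB_sa : ∀ v w : H, ⟪B v, w⟫ = ⟪v, B w⟫)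
    (hB_neg : ∀ v : H, ⟪B v, v⟫ ≤ 0)
    (k : ℕ) (hk : 1 ≤ k) (t : ℝ) (ht : 0 ≤ t) (v : Fin k → H) :
    Matrix.det (Matrix.of fun i j : Fin k =>
        ⟪(NormedSpace.exp (t • B)) (v i), (NormedSpace.exp (t • B)) (v j)⟫)
      ≤ Matrix.det (Matrix.of fun i j : Fin k => ⟪v i, v j⟫) := by
  set T := NormedSpace.exp (t • B) with hT
  have hA : (Matrix.of fun i j : Fin k => ⟪T (v i), T (v j)⟫).PosSemidef :=
    aux_gram_psd (fun i => T (v i))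
  have hB : (Matrix.of fun i j : Fin k => ⟪v i, v j⟫).IsHermitian :=
    (aux_gram_psd v).1
  refine aux_det_mono hA hB fun x => ?_
  have h1 := aux_gram_dot (fun i => T (v i)) x
  have h2 := aux_gram_dot v x
  rw [h1, h2]
  have hsum : ∑ i, x i • T (v i) = T (∑ i, x i • v i) := by
    rw [map_sum]
    exact Finset.sum_congr rfl fun i _ => (T.map_smul (x i) (v i)).symm
  rw [hsum]
  have hc := aux_exp_contraction B hB_neg t ht (∑ i, x i • v i)
  rw [real_inner_self_eq_norm_sq, real_inner_self_eq_norm_sq]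
  have h0 : (0 : ℝ) ≤ ‖T (∑ i, x i • v i)‖ := norm_nonneg _
  nlinarith [hc, norm_nonneg (∑ i, x i • v i)]
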